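/- arXiv:2305.06763 — 8 statements merged into one kernel-verified Lean document; each statement's English description precedes it below -/
import Mathlib

section
/- Let n, t, s be positive natural numbers. For j = 1, …, s let f_j : {0,1}^t → {0,1} be Boolean functions, and let F_j : (BitVec n)^t → BitVec n be their bitwise lifts, i.e., for every input tuple x and every bit position i < n, the i-th bit of F_j(x) equals f_j applied to the tuple of i-th bits of the components of x. Let a_1, …, a_s ∈ BitVec n be constants and define the linear MBA e(x) = Σ_{j=1}^s a_j * F_j(x), with multiplication and addition taken modulo 2^n. Then e(x) = 0 for all x ∈ (BitVec n)^t if and only if for every Boolean assignment b ∈ {0,1}^t the sum Σ_{j=1}^s a_j * (f_j(b) interpreted as the word 0 or 1 in BitVec n) equals 0 in BitVec n. -/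
lemma nat_sum_testBit (n : ℕ) : ∀ m : ℕ, m < 2^n →
    (∑ i ∈ Finset.range n, 2^i * (m.testBit i).toNat) = m := by
  induction n with
  | zero => intro m hm; interval_cases m; simp
  | succ n ih =>
    intro m hm
    rw [Finset.sum_range_succ']
    have h2 : m / 2 < 2^n := by omega
    simp only [Nat.testBit_add_one, pow_succ]
    have key : (∑ i ∈ Finset.range n, 2 ^ i * 2 * ((m / 2).testBit i).toNat) = 2 * (m / 2) := by
      calc (∑ i ∈ Finset.range n, 2 ^ i * 2 * ((m / 2).testBit i).toNat)
          = 2 * ∑ i ∈ Finset.range n, 2 ^ i * ((m / 2).testBit i).toNat := by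
            rw [Finset.mul_sum]
            exact Finset.sum_congr rfl fun i _ => by ring
        _ = 2 * (m / 2) := by rw [ih (m / 2) h2]
    rw [key]
    simp only [pow_zero, one_mul, Nat.testBit_zero]
    rcases Nat.mod_two_eq_zero_or_one m with h | h <;> simp [h] <;> omega

lemma bv_sum_bits (n : ℕ) (v : BitVec n) :
    v = ∑ i ∈ Finset.range n, (if v.getLsbD i then (2^i : BitVec n) else 0) := by
  have hR : (∑ i ∈ Finset.range n, (if v.getLsbD i then (2^i : BitVec n) else 0))
      = ((∑ i ∈ Finset.range n, 2^i * (v.toNat.testBit i).toNat : ℕ) : BitVec n) := by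
    push_cast
    refine Finset.sum_congr rfl fun i _ => ?_
    have hg : v.getLsbD i = v.toNat.testBit i := rfl
    rw [hg]
    cases v.toNat.testBit i <;> simp
  rw [hR, nat_sum_testBit n v.toNat v.isLt]
  simp [BitVec.natCast_eq_ofNat, BitVec.ofNat_toNat]

/-- **Zhou et al.'s theorem (Theorem 1).**
Let `n, t, s` be positive, `f j : {0,1}^t → {0,1}` Boolean functions and
`F j : (BitVec n)^t → BitVec n` their bitwise lifts (each bit `i < n` of `F j x`
equals `f j` applied to the `i`-th bits of the components of `x`).  For constants
`a j ∈ BitVec n`, the linear MBA `e x = Σ_j a j * F j x` vanishes identically iff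
`Σ_j a j * (f j b : BitVec n)` vanishes for every Boolean assignment `b ∈ {0,1}^t`. -/
theorem linear_mba_zero_iff_zero_on_bool
    (n t s : ℕ) (hn : 0 < n) (ht : 0 < t) (hs : 0 < s)
    (f : Fin s → (Fin t → Bool) → Bool)
    (F : Fin s → (Fin t → BitVec n) → BitVec n)
    (hF : ∀ (j : Fin s) (x : Fin t → BitVec n) (i : ℕ), i < n →
      (F j x).getLsbD i = f j (fun k => (x k).getLsbD i))
    (a : Fin s → BitVec n) :
    (∀ x : Fin t → BitVec n, (∑ j, a j * F j x) = 0) ↔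
      (∀ b : Fin t → Bool,
        (∑ j, a j * (if f j b then (1 : BitVec n) else 0)) = 0) := by
  constructor
  · intro h b
    set x : Fin t → BitVec n := fun k => if b k then BitVec.allOnes n else 0 with hx
    have hbit : ∀ (k : Fin t) (i : ℕ), i < n → (x k).getLsbD i = b k := by
      intro k i hi
      by_cases hb : b k <;> simp [hx, hb, BitVec.getLsbD_allOnes, hi]
    have hFj : ∀ j, F j x = if f j b then BitVec.allOnes n else 0 := by
      intro j
      apply BitVec.eq_of_getLsbD_eq
      intro i hi
      rw [hF j x i hi]
      have : (fun k => (x k).getLsbD i) = b := by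
        funext k; exact hbit k i hi
      rw [this]
      by_cases hb : f j b <;> simp [hb, BitVec.getLsbD_allOnes, hi]
    have h0 := h x
    have : (∑ j, a j * F j x) = -(∑ j, a j * (if f j b then (1 : BitVec n) else 0)) := by
      rw [← Finset.sum_neg_distrib]
      refine Finset.sum_congr rfl fun j _ => ?_
      rw [hFj j]
      by_cases hb : f j b <;> simp [hb, ← BitVec.neg_one_eq_allOnes]
    rw [this, neg_eq_zero] at h0
    exact h0
  · intro h x
    have hFj : ∀ j, F j x =
        ∑ i ∈ Finset.range n, (2^i : BitVec n) * (if f j (fun k => (x k).getLsbD i) then 1 else 0) := by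
      intro j
      rw [bv_sum_bits n (F j x)]
      refine Finset.sum_congr rfl fun i hi => ?_
      rw [hF j x i (Finset.mem_range.mp hi)]
      by_cases hb : f j (fun k => (x k).getLsbD i) <;> simp [hb]
    calc (∑ j, a j * F j x)
        = ∑ j, ∑ i ∈ Finset.range n,
            (2^i : BitVec n) * (a j * (if f j (fun k => (x k).getLsbD i) then 1 else 0)) := by
          refine Finset.sum_congr rfl fun j _ => ?_
          rw [hFj j, Finset.mul_sum]
          refine Finset.sum_congr rfl fun i _ => ?_
          ring
      _ = ∑ i ∈ Finset.range n, (2^i : BitVec n) *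
            (∑ j, a j * (if f j (fun k => (x k).getLsbD i) then (1 : BitVec n) else 0)) := by
          rw [Finset.sum_comm]
          refine Finset.sum_congr rfl fun i _ => ?_
          rw [Finset.mul_sum]
      _ = 0 := by
          refine Finset.sum_eq_zero fun i _ => ?_
          rw [h (fun k => (x k).getLsbD i), mul_zero]
end

section
/- Let n, t ∈ ℕ with n ≥ 1, and let e and f be linear MBAs over BitVec n in t variables, i.e., e(x) = Σ_{i∈I} a_i · E_i(x) and f(x) = Σ_{k∈K} c_k · F_k(x) where a_i, c_k ∈ BitVec n and E_i, F_k are bitwise lifts of Boolean functions in t variables. Then e(x) = f(x) for all x ∈ (BitVec n)^t if and only if e(b) = f(b) for every tuple b ∈ (BitVec n)^t in which each component is either the word 0 or the word 1. -/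
private theorem nat_bits_aux (m : ℕ) : ∀ n, m % 2^n = ∑ k ∈ Finset.range n, if m.testBit k then 2^k else 0 := by
  intro n
  induction n with
  | zero => simp [Nat.mod_one]
  | succ n ih =>
    rw [Finset.sum_range_succ, ← ih, pow_succ, Nat.mod_mul]
    have h1 : m.testBit n = decide (m / 2^n % 2 = 1) := Nat.testBit_eq_decide_div_mod_eq
    rw [h1]
    rcases Nat.mod_two_eq_zero_or_one (m / 2^n) with h | h <;> simp [h, Nat.mul_comm]

private theorem bv_decomp {n : ℕ} (w : BitVec n) :
    w = ∑ k ∈ Finset.range n, if w.getLsbD k then (2^k : BitVec n) else 0 := by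
  have h1 : w = ((w.toNat : ℕ) : BitVec n) := by simp
  conv_lhs => rw [h1]
  have h2 : w.toNat = w.toNat % 2^n := (Nat.mod_eq_of_lt w.isLt).symm
  rw [h2, nat_bits_aux]
  push_cast
  refine Finset.sum_congr rfl fun k _ => ?_
  have h3 : w.getLsbD k = w.toNat.testBit k := rfl
  rw [h3]

private theorem bv_sum_pow {n : ℕ} :
    ∑ k ∈ Finset.range n, (2^k : BitVec n) = -1 := by
  have := bv_decomp (-1 : BitVec n)
  rw [this]
  refine Finset.sum_congr rfl fun k hk => ?_
  simp [BitVec.neg_one_eq_allOnes, BitVec.getLsbD_allOnes, Finset.mem_range.mp hk]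

/-- Rewrite a linear MBA as a sum over bit positions of a column function. -/
private theorem mba_col {n t p : ℕ} (a : Fin p → BitVec n)
    (fE : Fin p → (Fin t → Bool) → Bool)
    (E : Fin p → (Fin t → BitVec n) → BitVec n)
    (hE : ∀ (i : Fin p) (x : Fin t → BitVec n) (k : ℕ), k < n →
      (E i x).getLsbD k = fE i (fun j => (x j).getLsbD k))
    (x : Fin t → BitVec n) :
    (∑ i, a i * E i x) =
      ∑ k ∈ Finset.range n, (2^k : BitVec n) *
        (∑ i, a i * (if fE i (fun j => (x j).getLsbD k) then 1 else 0)) := by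
  have step1 : ∀ i : Fin p, a i * E i x =
      ∑ k ∈ Finset.range n, (2^k : BitVec n) *
        (a i * (if fE i (fun j => (x j).getLsbD k) then 1 else 0)) := by
    intro i
    conv_lhs => rw [bv_decomp (E i x)]
    rw [Finset.mul_sum]
    refine Finset.sum_congr rfl fun k hk => ?_
    rw [hE i x k (Finset.mem_range.mp hk)]
    by_cases h : fE i (fun j => (x j).getLsbD k) <;> simp [h] <;> try ring
  calc (∑ i, a i * E i x)
      = ∑ i, ∑ k ∈ Finset.range n, (2^k : BitVec n) *
          (a i * (if fE i (fun j => (x j).getLsbD k) then 1 else 0)) :=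
        Finset.sum_congr rfl fun i _ => step1 i
    _ = ∑ k ∈ Finset.range n, ∑ i, (2^k : BitVec n) *
          (a i * (if fE i (fun j => (x j).getLsbD k) then 1 else 0)) := Finset.sum_comm
    _ = _ := Finset.sum_congr rfl fun k _ => by rw [Finset.mul_sum]

/-- **Theorem 2 (SiMBA).**  Two linear MBAs `e x = Σ_i a i * E i x` and
`f x = Σ_k c k * F k x` over `BitVec n` (`n ≥ 1`) in `t` variables, where the
`E i`, `F k` are bitwise lifts of Boolean functions, agree on all inputs iff
they agree on every tuple whose components are each the word `0` or `1`. -/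
theorem linear_mba_eq_iff_eq_on_zero_one
    (n t : ℕ) (hn : 1 ≤ n) (p q : ℕ)
    (a : Fin p → BitVec n) (c : Fin q → BitVec n)
    (fE : Fin p → (Fin t → Bool) → Bool)
    (fF : Fin q → (Fin t → Bool) → Bool)
    (E : Fin p → (Fin t → BitVec n) → BitVec n)
    (F : Fin q → (Fin t → BitVec n) → BitVec n)
    (hE : ∀ (i : Fin p) (x : Fin t → BitVec n) (k : ℕ), k < n →
      (E i x).getLsbD k = fE i (fun j => (x j).getLsbD k))
    (hF : ∀ (i : Fin q) (x : Fin t → BitVec n) (k : ℕ), k < n →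
      (F i x).getLsbD k = fF i (fun j => (x j).getLsbD k)) :
    (∀ x : Fin t → BitVec n, (∑ i, a i * E i x) = (∑ k, c k * F k x)) ↔
      (∀ b : Fin t → BitVec n, (∀ j, b j = 0 ∨ b j = 1) →
        (∑ i, a i * E i b) = (∑ k, c k * F k b)) := by
  constructor
  · intro h b _; exact h b
  · intro h x
    set S : (Fin t → Bool) → BitVec n :=
      fun β => ∑ i, a i * (if fE i β then 1 else 0) with hS
    set T : (Fin t → Bool) → BitVec n :=
      fun β => ∑ i, c i * (if fF i β then 1 else 0) with hT
    set β₀ : Fin t → Bool := fun _ => false with hβ₀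
    set C : BitVec n := ∑ k ∈ (Finset.range n).erase 0, (2^k : BitVec n) with hC
    have h0mem : (0 : ℕ) ∈ Finset.range n := Finset.mem_range.mpr hn
    -- key evaluation at 0/1 tuples
    have key : ∀ β : Fin t → Bool, S β + C * S β₀ = T β + C * T β₀ := by
      intro β
      set b : Fin t → BitVec n := fun j => if β j then 1 else 0 with hb
      have hb01 : ∀ j, b j = 0 ∨ b j = 1 := by
        intro j; by_cases hj : β j <;> simp [hb, hj]
      have hcol : ∀ k ∈ (Finset.range n), (fun j => (b j).getLsbD k) = if k = 0 then β else β₀ := by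
        intro k hk
        funext j
        by_cases hj : β j <;> by_cases hk0 : k = 0 <;>
          simp [hb, hj, hk0, hβ₀, BitVec.getLsbD_one, Nat.lt_of_lt_of_le Nat.zero_lt_one hn]
      have expand : ∀ (G : (Fin t → Bool) → BitVec n),
          (∑ k ∈ Finset.range n, (2^k : BitVec n) * G (fun j => (b j).getLsbD k))
            = G β + C * G β₀ := by
        intro G
        rw [← Finset.add_sum_erase _ _ h0mem]
        have e1 : (2^(0:ℕ) : BitVec n) * G (fun j => (b j).getLsbD 0) = G β := by
          rw [hcol 0 h0mem]; simp
        rw [e1]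
        congr 1
        rw [hC, Finset.sum_mul]
        refine Finset.sum_congr rfl fun k hk => ?_
        have hk0 : k ≠ 0 := (Finset.mem_erase.mp hk).1
        rw [hcol k (Finset.mem_of_mem_erase hk), if_neg hk0]
      have := h b hb01
      rwa [mba_col a fE E hE b, mba_col c fF F hF b, expand S, expand T] at this
    -- from β = β₀ : S β₀ = T β₀
    have hC1 : (1 : BitVec n) + C = -1 := by
      rw [hC, ← bv_sum_pow (n := n), ← Finset.add_sum_erase _ _ h0mem]
      norm_num
    have h00 : S β₀ = T β₀ := by
      have hk := key β₀
      have : ((1 : BitVec n) + C) * S β₀ = ((1 : BitVec n) + C) * T β₀ := by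
        rw [add_mul, add_mul, one_mul, one_mul, hk]
      rw [hC1] at this
      have := neg_inj.mp (by simpa using this)
      simpa using this
    have hST : ∀ β, S β = T β := by
      intro β
      have hk := key β
      rw [h00] at hk
      exact add_right_cancel hk
    rw [mba_col a fE E hE x, mba_col c fF F hF x]
    exact Finset.sum_congr rfl fun k _ =>
      congrArg (fun z => (2^k : BitVec n) * z) (hST fun j => (x j).getLsbD k)
end

section
/- For every n ∈ ℕ and all a, b, X ∈ BitVec n such that a and b are bitwise disjoint (i.e., a & b = 0), the identity (a | X) + (b | X) = ((a + b) | X) + X holds, where arithmetic is modulo 2^n. -/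
theorem nat_or_add_and (x y : ℕ) : (x ||| y) + (x &&& y) = x + y := by
  induction x using Nat.binaryRec generalizing y with
  | zero => simp
  | bit bx x ih =>
    induction y using Nat.bitCasesOn with
    | bit by' y =>
      rw [Nat.lor_bit, Nat.land_bit, Nat.bit_val, Nat.bit_val, Nat.bit_val, Nat.bit_val]
      have := ih y
      cases bx <;> cases by' <;> simp at * <;> omega

theorem bv_or_add_and {n : ℕ} (x y : BitVec n) : (x ||| y) + (x &&& y) = x + y := by
  apply BitVec.eq_of_toNat_eq
  simp only [BitVec.toNat_add, BitVec.toNat_or, BitVec.toNat_and]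
  rw [nat_or_add_and]

/-- For bitwise disjoint constants `a, b`: `(a | X) + (b | X) = ((a + b) | X) + X`. -/
theorem or_add_or_of_disjoint (n : ℕ) (a b X : BitVec n) (hab : a &&& b = 0) :
    (a ||| X) + (b ||| X) = ((a + b) ||| X) + X := by
  have hab' : a + b = a ||| b := by rw [← bv_or_add_and a b, hab, add_zero]
  have hdist : (a ||| b) &&& X = (a &&& X) ||| (b &&& X) := by
    apply BitVec.eq_of_toNat_eq
    simp [Nat.and_or_distrib_right]
  have hdisj : (a &&& X) &&& (b &&& X) = 0 := by
    calc (a &&& X) &&& (b &&& X) = (a &&& b) &&& (X &&& X) := by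
          rw [BitVec.and_assoc, ← BitVec.and_assoc X b X, BitVec.and_comm X b,
            BitVec.and_assoc, ← BitVec.and_assoc]
      _ = 0 := by rw [hab]; simp
  have hsum : (a + b) &&& X = (a &&& X) + (b &&& X) := by
    rw [hab', hdist, ← bv_or_add_and (a &&& X) (b &&& X), hdisj, add_zero]
  have h1 : (a ||| X) = a + X - (a &&& X) := by
    rw [← bv_or_add_and a X]; ring
  have h2 : (b ||| X) = b + X - (b &&& X) := by
    rw [← bv_or_add_and b X]; ring
  have h3 : ((a + b) ||| X) = (a + b) + X - ((a + b) &&& X) := by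
    rw [← bv_or_add_and (a + b) X]; ring
  rw [h1, h2, h3, hsum]; ring
end

section
/- For every n ∈ ℕ and all a, b, X ∈ BitVec n such that a and b are bitwise disjoint (i.e., a & b = 0), the identity (a ^ X) + (b ^ X) = 2*((~(a + b)) & X) + a + b holds, where ^ denotes bitwise xor and arithmetic is modulo 2^n. -/
theorem nat_key : ∀ x y : ℕ, x + y = (x ^^^ y) + 2 * (x &&& y) := by
  intro x
  induction x using Nat.binaryRec with
  | zero => simp
  | bit b x ih =>
    intro y
    induction y using Nat.binaryRec with
    | zero => simp
    | bit c y _ =>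
      have h := ih y
      rw [Nat.xor_bit, Nat.land_bit, Nat.bit_val, Nat.bit_val, Nat.bit_val, Nat.bit_val]
      cases b <;> cases c <;> simp <;> omega

theorem bv_key (n : ℕ) (x y : BitVec n) : x + y = (x ^^^ y) + 2 * (x &&& y) := by
  apply BitVec.eq_of_toNat_eq
  simp only [BitVec.toNat_add, BitVec.toNat_mul, BitVec.toNat_xor, BitVec.toNat_and]
  rw [show (2 : BitVec n).toNat = 2 % 2^n from rfl, Nat.mod_mul_mod, Nat.add_mod_mod,
    ← nat_key]

/-- For bitwise disjoint constants `a, b`: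
`(a ^ X) + (b ^ X) = 2((~(a + b)) & X) + a + b`. -/
theorem xor_add_xor_of_disjoint (n : ℕ) (a b X : BitVec n) (hab : a &&& b = 0) :
    (a ^^^ X) + (b ^^^ X) = 2 * ((~~~(a + b)) &&& X) + a + b := by
  have hor : a + b = a ||| b := BitVec.add_eq_or_of_and_eq_zero a b hab
  have hx : (a ^^^ X) ^^^ (b ^^^ X) = a + b := by
    have h := bv_key n a b
    rw [hab] at h
    simp at h
    rw [h]
    ext i
    simp [Bool.xor_assoc, Bool.xor_comm, Bool.xor_left_comm]
  have hd : (a ^^^ X) &&& (b ^^^ X) = ~~~(a + b) &&& X := by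
    rw [hor]
    ext i
    have hb : (a &&& b).getLsbD (i : ℕ) = (0#n).getLsbD (i : ℕ) := by rw [hab]; rfl
    simp only [BitVec.getLsbD_and, BitVec.getLsbD_zero] at hb
    simp only [← BitVec.getLsbD_eq_getElem, BitVec.getLsbD_and, BitVec.getLsbD_xor, BitVec.getLsbD_not, BitVec.getLsbD_or]
    cases ha' : a.getLsbD (i : ℕ) <;> cases hb' : b.getLsbD (i : ℕ) <;> simp_all
  rw [bv_key n (a ^^^ X) (b ^^^ X), hx, hd]
  ring
end

section
/- For every n ∈ ℕ and all a, b, X ∈ BitVec n such that a and b are bitwise disjoint (i.e., a & b = 0), the identity (a | X) - (b & X) = ((~(a + b)) & X) + a holds, where arithmetic is modulo 2^n. -/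
/-- For bitwise disjoint constants `a, b`:
`(a | X) - (b & X) = ((~(a + b)) & X) + a`. -/
theorem or_sub_and_of_disjoint (n : ℕ) (a b X : BitVec n) (hab : a &&& b = 0) :
    (a ||| X) - (b &&& X) = ((~~~(a + b)) &&& X) + a := by
  have hab' : a + b = a ||| b := BitVec.add_eq_or_of_and_eq_zero a b hab
  have hbit : ∀ i : Fin n, (a.getLsbD i && b.getLsbD i) = false := by
    intro i
    have := congrArg (fun v => v.getLsbD i) hab
    simpa using this
  have h1 : a ||| X = a + (~~~a &&& X) := by
    rw [BitVec.add_eq_or_of_and_eq_zero]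
    · ext i hi
      cases ha : a[i] <;> simp [ha]
    · ext i hi
      cases ha : a[i] <;> simp [ha]
  have h2 : ~~~a &&& X = (~~~(a + b) &&& X) + (b &&& X) := by
    rw [BitVec.add_eq_or_of_and_eq_zero]
    · ext i hi
      have := hbit ⟨i, hi⟩
      simp [hab'] at this ⊢
      cases ha : a[i] <;> cases hb : b[i] <;> simp_all
    · ext i hi
      have := hbit ⟨i, hi⟩
      simp [hab'] at this ⊢
      cases ha : a[i] <;> cases hb : b[i] <;> simp_all
  rw [h1, h2]
  ring
end

section
/- For every n ∈ ℕ and all a, b, X ∈ BitVec n such that a and b are bitwise disjoint (i.e., a & b = 0), the identity (a ^ X) - 2*(b & X) = 2*((~(a + b)) & X) - X + a holds, where ^ denotes bitwise xor and arithmetic is modulo 2^n. -/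
theorem natKey (x : ℕ) : ∀ y, x + y = (x ^^^ y) + 2 * (x &&& y) := by
  induction x using Nat.binaryRec with
  | zero => simp
  | bit b m ih =>
    intro y
    induction y using Nat.binaryRec with
    | zero => simp
    | bit c k _ =>
      rw [Nat.xor_bit, Nat.land_bit]
      have h1 := ih k
      have h2 : (bne b c).toNat + 2 * (b && c).toNat = b.toNat + c.toNat := by
        cases b <;> cases c <;> rfl
      simp only [Nat.bit_val]
      omega

theorem bvKey {n : ℕ} (x y : BitVec n) : x + y = (x ^^^ y) + 2 * (x &&& y) := by
  apply BitVec.eq_of_toNat_eq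
  have h := natKey x.toNat y.toNat
  simp only [BitVec.toNat_add, BitVec.toNat_mul, BitVec.toNat_xor, BitVec.toNat_and,
    BitVec.toNat_ofNat]
  conv_lhs => rw [h]
  simp [Nat.add_mod, Nat.mul_mod]

theorem bvDisjXorOr {n : ℕ} (x y : BitVec n) (h : x &&& y = 0) : x ^^^ y = x ||| y := by
  ext i
  have hb := congrArg (fun z => z.getLsbD i) h
  simp only [BitVec.getLsbD_and, BitVec.getLsbD_zero] at hb
  simp only [← BitVec.getLsbD_eq_getElem, BitVec.getLsbD_xor, BitVec.getLsbD_or]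
  cases hx : x.getLsbD i <;> cases hy : y.getLsbD i <;> simp_all

theorem bvPartition {n : ℕ} (c X : BitVec n) : X = (c &&& X) + (~~~c &&& X) := by
  rw [bvKey]
  have h1 : (c &&& X) &&& (~~~c &&& X) = 0 := by
    ext i
    simp only [← BitVec.getLsbD_eq_getElem, BitVec.getLsbD_and, BitVec.getLsbD_not, BitVec.getLsbD_zero]
    cases hc : c.getLsbD i <;> simp [hc]
  have h2 : (c &&& X) ^^^ (~~~c &&& X) = X := by
    ext i hi
    simp only [← BitVec.getLsbD_eq_getElem, BitVec.getLsbD_xor, BitVec.getLsbD_and, BitVec.getLsbD_not]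
    cases hc : c.getLsbD i <;> cases hx : X.getLsbD i <;> simp [hc, hx, hi]
  rw [h1, h2, mul_zero, add_zero]

theorem bvAndAndDisj {n : ℕ} (a b X : BitVec n) (hab : a &&& b = 0) :
    (a &&& X) &&& (b &&& X) = 0 := by
  ext i
  have hb := congrArg (fun z => z.getLsbD i) hab
  simp only [BitVec.getLsbD_and, BitVec.getLsbD_zero] at hb ⊢
  cases ha : a.getLsbD i <;> cases hbb : b.getLsbD i <;> simp_all

theorem bvXorAndOr {n : ℕ} (a b X : BitVec n) (hab : a &&& b = 0) :
    (a &&& X) ^^^ (b &&& X) = (a ||| b) &&& X := by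
  ext i
  have hb := congrArg (fun z => z.getLsbD i) hab
  simp only [BitVec.getLsbD_and, BitVec.getLsbD_zero] at hb
  simp only [← BitVec.getLsbD_eq_getElem, BitVec.getLsbD_xor, BitVec.getLsbD_and, BitVec.getLsbD_or]
  cases ha : a.getLsbD i <;> cases hbb : b.getLsbD i <;> simp_all

/-- For bitwise disjoint constants `a, b`:
`(a ^ X) - 2(b & X) = 2((~(a + b)) & X) - X + a`. -/
theorem xor_sub_two_mul_and_of_disjoint (n : ℕ) (a b X : BitVec n) (hab : a &&& b = 0) :
    (a ^^^ X) - 2 * (b &&& X) = 2 * ((~~~(a + b)) &&& X) - X + a := by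
  have hsum : a + b = a ||| b := by
    rw [bvKey a b, hab, mul_zero, add_zero, bvDisjXorOr a b hab]
  have hpart : X = ((a ||| b) &&& X) + ((~~~(a ||| b)) &&& X) := bvPartition _ _
  have huv : (a ||| b) &&& X = (a &&& X) + (b &&& X) := by
    rw [bvKey (a &&& X) (b &&& X), bvAndAndDisj a b X hab, mul_zero, add_zero,
      bvXorAndOr a b X hab]
  have haX : a ^^^ X = a + X - 2 * (a &&& X) := by
    rw [bvKey a X]; ring
  rw [hsum, haX]
  rw [huv] at hpart
  linear_combination 2 * hpart
end

section
/- For every n ∈ ℕ and all a, b, X ∈ BitVec n such that a and b are bitwise disjoint (i.e., a & b = 0), the identity (a ^ X) + 2*(b | X) = 2*((~(a + b)) & X) + X + a + 2*b holds, where ^ denotes bitwise xor and arithmetic is modulo 2^n. -/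
lemma nat_add_eq_xor_add_two_and (x y : ℕ) : x + y = (x ^^^ y) + 2 * (x &&& y) := by
  induction x using Nat.binaryRec generalizing y with
  | zero => simp
  | bit b m ih =>
    induction y using Nat.bitCasesOn with
    | bit c k =>
      rw [Nat.xor_bit, Nat.land_bit]
      have := ih k
      rcases b <;> rcases c <;> simp [Nat.bit_val] <;> omega

lemma nat_add_eq_or_add_and (x y : ℕ) : x + y = (x ||| y) + (x &&& y) := by
  induction x using Nat.binaryRec generalizing y with
  | zero => simp
  | bit b m ih =>
    induction y using Nat.bitCasesOn with
    | bit c k =>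
      rw [Nat.lor_bit, Nat.land_bit]
      have := ih k
      rcases b <;> rcases c <;> simp [Nat.bit_val] <;> omega


example (n : ℕ) (a : BitVec n) : ((a.toNat : ℕ) : BitVec n) = a := by
  simp [BitVec.natCast_eq_ofNat]

lemma ofNat_toNat' {n : ℕ} (v : BitVec n) : BitVec.ofNat n v.toNat = v := by simp

lemma bv_cast_eq {n : ℕ} (x y : ℕ) (h : x = y) : (x : BitVec n) = (y : BitVec n) := by rw [h]

lemma bv_h1 {n : ℕ} (a X : BitVec n) : a + X = (a ^^^ X) + 2 * (a &&& X) := by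
  have h := bv_cast_eq (n := n) _ _ (nat_add_eq_xor_add_two_and a.toNat X.toNat)
  push_cast at h
  simp only [BitVec.natCast_eq_ofNat] at h
  rw [← BitVec.toNat_xor, ← BitVec.toNat_and] at h
  simp only [ofNat_toNat'] at h
  exact h

lemma bv_h2 {n : ℕ} (a X : BitVec n) : a + X = (a ||| X) + (a &&& X) := by
  have h := bv_cast_eq (n := n) _ _ (nat_add_eq_or_add_and a.toNat X.toNat)
  push_cast at h
  simp only [BitVec.natCast_eq_ofNat] at h
  rw [← BitVec.toNat_or, ← BitVec.toNat_and] at h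
  simp only [ofNat_toNat'] at h
  exact h

/-- For bitwise disjoint constants `a, b`:
`(a ^ X) + 2(b | X) = 2((~(a + b)) & X) + X + a + 2b`. -/
theorem xor_add_two_mul_or_of_disjoint (n : ℕ) (a b X : BitVec n) (hab : a &&& b = 0) :
    (a ^^^ X) + 2 * (b ||| X) = 2 * ((~~~(a + b)) &&& X) + X + a + 2 * b := by
  have h1 := bv_h1 a X
  have h2 := bv_h2 b X
  have hc : a + b = a ||| b := by
    have := bv_h2 a b
    simpa [hab] using this
  have e2 : ((a + b) &&& X) &&& ((~~~(a + b)) &&& X) = 0 := by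
    ext i
    simp only [BitVec.getElem_and, BitVec.getElem_not, BitVec.getElem_zero]
    cases (a + b)[i] <;> cases X[i] <;> simp
  have e1 : ((a + b) &&& X) ||| ((~~~(a + b)) &&& X) = X := by
    ext i
    simp only [BitVec.getElem_and, BitVec.getElem_not, BitVec.getElem_or]
    cases (a + b)[i] <;> cases X[i] <;> simp
  have h3 : ((a + b) &&& X) + ((~~~(a + b)) &&& X) = X := by
    have := bv_h2 ((a + b) &&& X) ((~~~(a + b)) &&& X)
    rw [e2, e1] at this
    linear_combination this
  have h4 : (a + b) &&& X = (a &&& X) + (b &&& X) := by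
    have hab' : ∀ i : Fin n, (a.getLsbD i && b.getLsbD i) = false := by
      intro i
      have := congrArg (fun v => v.getLsbD i) hab
      simpa using this
    have hd : (a &&& X) &&& (b &&& X) = 0 := by
      ext i
      have := hab' ⟨i, by assumption⟩
      simp only [BitVec.getElem_and, BitVec.getElem_zero]
      cases ha : a[i] <;> cases hb : b[i] <;>
        simp_all
    have ho : (a &&& X) ||| (b &&& X) = (a + b) &&& X := by
      rw [hc]
      ext i
      simp only [BitVec.getElem_and, BitVec.getElem_or]
      cases a[i] <;> cases b[i] <;> cases X[i] <;> simp
    have := bv_h2 (a &&& X) (b &&& X)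
    rw [hd, ho] at this
    linear_combination -this
  linear_combination -h1 - 2*h2 - 2*h3 + 2*h4
end

section
/- For every n ∈ ℕ and all x, y, z ∈ BitVec n, the identity -2*y - 2*z + 2*(x & y) + 2*(x & z) + 4*(y & z) - 4*(x & y & z) = -2*((~x) & (y ^ z)) holds, where ^ denotes bitwise xor and arithmetic is modulo 2^n. -/
private theorem nat_add_eq_xor_add_two_mul_and (a b : ℕ) :
    a + b = (a ^^^ b) + 2 * (a &&& b) := by
  induction a using Nat.binaryRec generalizing b with
  | zero => simp
  | bit c m ih =>
    induction b using Nat.binaryRec with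
    | zero => simp
    | bit d k _ =>
      rw [Nat.xor_bit, Nat.land_bit]
      have := ih k
      simp only [Nat.bit_val]
      cases c <;> cases d <;> simp <;> omega

private theorem bv_add_eq_xor_add_two_mul_and {n : ℕ} (a b : BitVec n) :
    a + b = (a ^^^ b) + 2 * (a &&& b) := by
  apply BitVec.eq_of_toNat_eq
  rw [BitVec.toNat_add, BitVec.toNat_add, BitVec.toNat_mul, BitVec.toNat_xor,
    BitVec.toNat_and, BitVec.ofNat_eq_ofNat, BitVec.toNat_ofNat, Nat.mod_mul_mod, Nat.add_mod_mod,
    nat_add_eq_xor_add_two_mul_and]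

/-- `-2y - 2z + 2(x&y) + 2(x&z) + 4(y&z) - 4(x&y&z) = -2((~x) & (y ^ z))` in `BitVec n`. -/
theorem mba_partition_example (n : ℕ) (x y z : BitVec n) :
    -(2 * y) - 2 * z + 2 * (x &&& y) + 2 * (x &&& z) + 4 * (y &&& z)
        - 4 * (x &&& y &&& z) = -(2 * ((~~~x) &&& (y ^^^ z))) := by
  have h1 : y + z = (y ^^^ z) + 2 * (y &&& z) := bv_add_eq_xor_add_two_mul_and y z
  have h2 : (x &&& y) + (x &&& z) = (x &&& (y ^^^ z)) + 2 * (x &&& y &&& z) := by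
    rw [bv_add_eq_xor_add_two_mul_and]
    congr 1
    · ext i; simp [Bool.and_xor_distrib_left]
    · congr 1; apply BitVec.eq_of_getLsbD_eq; intro i hi; simp only [BitVec.getLsbD_and]
      cases x.getLsbD i <;> cases y.getLsbD i <;> cases z.getLsbD i <;> simp
  have h3 : ((~~~x) &&& (y ^^^ z)) + (x &&& (y ^^^ z)) = (y ^^^ z) := by
    rw [bv_add_eq_xor_add_two_mul_and]
    have e1 : ((~~~x) &&& (y ^^^ z)) ^^^ (x &&& (y ^^^ z)) = y ^^^ z := by
      apply BitVec.eq_of_getLsbD_eq; intro i hi; simp only [BitVec.getLsbD_xor, BitVec.getLsbD_and, BitVec.getLsbD_not, hi,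
        decide_true, Bool.true_and]
      cases x.getLsbD i <;> cases y.getLsbD i <;> cases z.getLsbD i <;> simp
    have e2 : ((~~~x) &&& (y ^^^ z)) &&& (x &&& (y ^^^ z)) = 0#n := by
      apply BitVec.eq_of_getLsbD_eq; intro i hi; simp only [BitVec.getLsbD_xor, BitVec.getLsbD_and, BitVec.getLsbD_not, hi,
        decide_true, Bool.true_and, BitVec.getLsbD_zero]
      cases x.getLsbD i <;> cases y.getLsbD i <;> cases z.getLsbD i <;> simp
    rw [e1, e2]; simp
  linear_combination (-2 : BitVec n) * h1 + 2 * h2 + 2 * h3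
end
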